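/- arXiv:2206.01027 — 2 statements merged into one kernel-verified Lean document; each statement's English description precedes it below -/
import Mathlib

section
/- If α is a simple multisegment, then n_{α~} = L_α: the number of segments of the Zelevinsky involution of α equals the maximal length of a segment of α. -/
/-- A finite multiset of integer pairs `(b, e)` is a multisegment if each pair
satisfies `b ≤ e`; the pair `(b, e)` encodes the segment `{b, b+1, …, e}`. -/
def IsMultisegment (α : Multiset (ℤ × ℤ)) : Prop := ∀ p ∈ α, p.1 ≤ p.2

/-- The length `e - b + 1` of the segment `(b, e)`. -/
def segLen (p : ℤ × ℤ) : ℕ := (p.2 - p.1 + 1).toNat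

/-- `L_α`: the maximal length of a segment of `α`. -/
def maxLen (α : Multiset (ℤ × ℤ)) : ℕ := (α.map segLen).sup

/-- The union of the segments `p` and `q` is a segment strictly containing both. -/
def Linked (p q : ℤ × ℤ) : Prop :=
  q.1 ≤ p.2 + 1 ∧ p.1 ≤ q.2 + 1 ∧
    (min p.1 q.1, max p.2 q.2) ≠ p ∧ (min p.1 q.1, max p.2 q.2) ≠ q

/-- The intersection of two segments, as a multiset (empty if the segments are disjoint). -/
def interMS (p q : ℤ × ℤ) : Multiset (ℤ × ℤ) :=
  if max p.1 q.1 ≤ min p.2 q.2 then {(max p.1 q.1, min p.2 q.2)} else 0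

/-- An elementary operation replaces two segments whose union is a segment strictly
containing both by their union and (if nonempty) their intersection. -/
def ElemStep (α β : Multiset (ℤ × ℤ)) : Prop :=
  ∃ p q rest, α = p ::ₘ q ::ₘ rest ∧ Linked p q ∧
    β = (min p.1 q.1, max p.2 q.2) ::ₘ (interMS p q + rest)

/-- The partial order on multisegments: `α ≤ β` iff `β` is obtained from `α` by
a finite (possibly empty) sequence of elementary operations. -/
def msLE (α β : Multiset (ℤ × ℤ)) : Prop := Relation.ReflTransGen ElemStep α β

/-- Mœglin–Waldspurger: the chain `Δ_e, Δ_{e-1}, …, Δ_m` starting from `Δ`,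
where at each step we pass to a segment of `α` with end value one less, preceding
the current segment, and with maximal base value (fuel-driven recursion). -/
def mwChainAux : ℕ → Multiset (ℤ × ℤ) → ℤ × ℤ → List (ℤ × ℤ)
  | 0, _, Δ => [Δ]
  | n + 1, α, Δ =>
    let s := ((α.filter (fun p => p.2 = Δ.2 - 1 ∧ p.1 < Δ.1)).map Prod.fst).toFinset
    if h : s.Nonempty then Δ :: mwChainAux n α (s.max' h, Δ.2 - 1) else [Δ]

/-- The Mœglin–Waldspurger chain `Δ_e, Δ_{e-1}, …, Δ_m` of `α`: here `e` is the largest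
end value of a segment of `α` and `Δ_e` has maximal base value among segments with
end value `e`. -/
def mwChain (α : Multiset (ℤ × ℤ)) : List (ℤ × ℤ) :=
  let ends := (α.map Prod.snd).toFinset
  if h : ends.Nonempty then
    let e := ends.max' h
    let bases := ((α.filter (fun p => p.2 = e)).map Prod.fst).toFinset
    if hb : bases.Nonempty then mwChainAux α.card α (bases.max' hb, e) else []
  else []

/-- `M(α) = [m, e]`. -/
def mwSegment (α : Multiset (ℤ × ℤ)) : ℤ × ℤ :=
  (((mwChain α).getLastD (0, 0)).2, ((mwChain α).headD (0, 0)).2)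

/-- Delete the end value from a segment, discarding the segment if it becomes empty. -/
def mwShrink (p : ℤ × ℤ) : Multiset (ℤ × ℤ) :=
  if p.1 ≤ p.2 - 1 then {(p.1, p.2 - 1)} else 0

/-- `α ∖ M(α)`: delete the integer `i` from the segment `Δ_i` for each `m ≤ i ≤ e`. -/
def mwResidual (α : Multiset (ℤ × ℤ)) : Multiset (ℤ × ℤ) :=
  (α - ↑(mwChain α)) + (↑(mwChain α) : Multiset (ℤ × ℤ)).bind mwShrink

/-- The total number of integers occurring in the segments of `α` (with multiplicity). -/
def msSize (α : Multiset (ℤ × ℤ)) : ℕ := (α.map segLen).sum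

def tildeAux : ℕ → Multiset (ℤ × ℤ) → Multiset (ℤ × ℤ)
  | 0, _ => 0
  | n + 1, α => if α = 0 then 0 else mwSegment α ::ₘ tildeAux n (mwResidual α)

/-- The Zelevinsky involution `α ↦ α~`, computed by the Mœglin–Waldspurger algorithm:
`∅~ = ∅` and `α~ = {M(α)} ⊎ (α ∖ M(α))~`. -/
def tilde (α : Multiset (ℤ × ℤ)) : Multiset (ℤ × ℤ) := tildeAux (msSize α) α

/-- The simple multisegment `{[b, e], [b+1, e+1], …, [b+n-1, e+n-1]}`. -/
def simpleMS (b e : ℤ) (n : ℕ) : Multiset (ℤ × ℤ) :=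
  (Multiset.range n).map fun k => (b + (k : ℤ), e + (k : ℤ))

/-- A multisegment is simple if it has the form `{[b,e], [b+1,e+1], …, [b+n-1, e+n-1]}`
with `b ≤ e` and `n ≥ 1`. -/
def IsSimple (α : Multiset (ℤ × ℤ)) : Prop :=
  ∃ (b e : ℤ) (n : ℕ), b ≤ e ∧ 1 ≤ n ∧ α = simpleMS b e n

/-- The union `⋃_{Δ ∈ α} Δ` of the segments of `α`, as a set of integers. -/
def unionSet (α : Multiset (ℤ × ℤ)) : Set ℤ := {x | ∃ p ∈ α, p.1 ≤ x ∧ x ≤ p.2}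

/-- `c_α`: the minimal number of segments whose union is `⋃_{Δ ∈ α} Δ`. -/
noncomputable def cNum (α : Multiset (ℤ × ℤ)) : ℕ :=
  sInf {n | ∃ β : Multiset (ℤ × ℤ), IsMultisegment β ∧ β.card = n ∧ unionSet β = unionSet α}


section Aux

lemma simpleMS_eq (b e : ℤ) (n : ℕ) :
    simpleMS b e n = (Multiset.range n).map (fun k : ℕ => (b + (k:ℤ), e + (k:ℤ))) := by
  simp [simpleMS, Multiset.map_map]

lemma mem_simpleMS {b e : ℤ} {n : ℕ} {p : ℤ × ℤ} :
    p ∈ simpleMS b e n ↔ ∃ j : ℕ, j < n ∧ p = (b + (j:ℤ), e + (j:ℤ)) := by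
  simp [simpleMS_eq, eq_comm]

lemma mwChainAux_simple (b e : ℤ) (n : ℕ) :
    ∀ k m : ℕ, k < n → k ≤ m →
    mwChainAux m (simpleMS b e n) (b + (k:ℤ), e + (k:ℤ)) =
      (List.range (k+1)).map (fun j : ℕ => (b + (k:ℤ) - (j:ℤ), e + (k:ℤ) - (j:ℤ))) := by
  intro k
  induction k with
  | zero =>
    intro m hk _
    have hs : ¬ ((((simpleMS b e n).filter
        (fun p => p.2 = (b + ((0:ℕ):ℤ), e + ((0:ℕ):ℤ)).2 - 1 ∧
          p.1 < (b + ((0:ℕ):ℤ), e + ((0:ℕ):ℤ)).1)).map Prod.fst).toFinset).Nonempty := by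
      rintro ⟨x, hx⟩
      simp only [Multiset.mem_toFinset, Multiset.mem_map, Multiset.mem_filter] at hx
      obtain ⟨p, ⟨hp, h1, h2⟩, rfl⟩ := hx
      rw [mem_simpleMS] at hp
      obtain ⟨j, hj, rfl⟩ := hp
      simp only at h1 h2
      omega
    cases m with
    | zero => simp [mwChainAux, List.range_succ, Prod.ext_iff]
    | succ m =>
      rw [mwChainAux]
      simp only [dif_neg hs]
      simp [List.range_succ, Prod.ext_iff]
  | succ k ih =>
    intro m hk hm
    obtain ⟨m, rfl⟩ : ∃ m', m = m' + 1 := ⟨m - 1, by omega⟩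
    rw [mwChainAux]
    have hset : (((simpleMS b e n).filter
        (fun p => p.2 = (b + ((k+1:ℕ):ℤ), e + ((k+1:ℕ):ℤ)).2 - 1 ∧
          p.1 < (b + ((k+1:ℕ):ℤ), e + ((k+1:ℕ):ℤ)).1)).map Prod.fst).toFinset
        = {b + (k:ℤ)} := by
      ext x
      simp only [Multiset.mem_toFinset, Multiset.mem_map, Multiset.mem_filter,
        Finset.mem_singleton]
      constructor
      · rintro ⟨p, ⟨hp, h1, h2⟩, rfl⟩
        rw [mem_simpleMS] at hp
        obtain ⟨j, hj, rfl⟩ := hp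
        simp only at h1 h2 ⊢
        omega
      · rintro rfl
        refine ⟨(b + (k:ℤ), e + (k:ℤ)), ⟨mem_simpleMS.2 ⟨k, by omega, rfl⟩, ?_, ?_⟩, rfl⟩
        · simp only; push_cast; ring
        · simp only; push_cast; omega
    simp only [hset, Finset.singleton_nonempty, dif_pos, Finset.max'_singleton]
    have harg : ((b + ((k+1:ℕ):ℤ), e + ((k+1:ℕ):ℤ)).2 - 1 : ℤ) = e + (k:ℤ) := by
      push_cast; ring
    rw [harg, ih m (by omega) (by omega)]
    conv_rhs => rw [List.range_succ_eq_map]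
    rw [List.map_cons, List.map_map]
    congr 1
    · simp only [Prod.ext_iff]
      push_cast
      omega
    · apply List.map_congr_left
      intro a _
      simp only [Function.comp_apply, Prod.ext_iff]
      push_cast
      omega

lemma card_simpleMS (b e : ℤ) (n : ℕ) : Multiset.card (simpleMS b e n) = n := by
  simp [simpleMS_eq]

lemma mwChain_simple (b e : ℤ) (n : ℕ) (hn : 1 ≤ n) :
    mwChain (simpleMS b e n) =
      (List.range n).map
        (fun j : ℕ => (b + ((n-1:ℕ):ℤ) - (j:ℤ), e + ((n-1:ℕ):ℤ) - (j:ℤ))) := by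
  have hne : (e + ((n-1:ℕ):ℤ)) ∈ ((simpleMS b e n).map Prod.snd).toFinset := by
    simp only [Multiset.mem_toFinset, Multiset.mem_map]
    exact ⟨(b + ((n-1:ℕ):ℤ), e + ((n-1:ℕ):ℤ)), mem_simpleMS.2 ⟨n-1, by omega, rfl⟩, rfl⟩
  have h1 : (((simpleMS b e n).map Prod.snd).toFinset).Nonempty := ⟨_, hne⟩
  have hmax : (((simpleMS b e n).map Prod.snd).toFinset).max' h1 = e + ((n-1:ℕ):ℤ) := by
    refine le_antisymm (Finset.max'_le _ _ _ ?_) (Finset.le_max' _ _ hne)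
    intro y hy
    simp only [Multiset.mem_toFinset, Multiset.mem_map] at hy
    obtain ⟨p, hp, rfl⟩ := hy
    rw [mem_simpleMS] at hp
    obtain ⟨j, hj, rfl⟩ := hp
    simp only
    omega
  have hbne : (b + ((n-1:ℕ):ℤ)) ∈
      (((simpleMS b e n).filter (fun p => p.2 = e + ((n-1:ℕ):ℤ))).map Prod.fst).toFinset := by
    simp only [Multiset.mem_toFinset, Multiset.mem_map, Multiset.mem_filter]
    exact ⟨(b + ((n-1:ℕ):ℤ), e + ((n-1:ℕ):ℤ)),
      ⟨mem_simpleMS.2 ⟨n-1, by omega, rfl⟩, rfl⟩, rfl⟩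
  have h2 : ((((simpleMS b e n).filter
      (fun p => p.2 = e + ((n-1:ℕ):ℤ))).map Prod.fst).toFinset).Nonempty := ⟨_, hbne⟩
  have hbmax : ((((simpleMS b e n).filter
      (fun p => p.2 = e + ((n-1:ℕ):ℤ))).map Prod.fst).toFinset).max' h2
      = b + ((n-1:ℕ):ℤ) := by
    refine le_antisymm (Finset.max'_le _ _ _ ?_) (Finset.le_max' _ _ hbne)
    intro y hy
    simp only [Multiset.mem_toFinset, Multiset.mem_map, Multiset.mem_filter] at hy
    obtain ⟨p, ⟨hp, hp2⟩, rfl⟩ := hy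
    rw [mem_simpleMS] at hp
    obtain ⟨j, hj, rfl⟩ := hp
    simp only at hp2 ⊢
    omega
  rw [mwChain]
  simp only [dif_pos h1]
  rw [hmax]
  simp only [dif_pos h2]
  rw [hbmax, card_simpleMS]
  rw [mwChainAux_simple b e n (n-1) n (by omega) (by omega)]
  have hnn : n - 1 + 1 = n := by omega
  rw [hnn]

lemma nodup_simpleMS (b e : ℤ) (n : ℕ) : (simpleMS b e n).Nodup := by
  rw [simpleMS_eq]
  apply Multiset.Nodup.map _ (Multiset.nodup_range n)
  intro x y h
  simp only [Prod.mk.injEq] at h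
  omega

lemma coe_mwChain_simple (b e : ℤ) (n : ℕ) (hn : 1 ≤ n) :
    (↑(mwChain (simpleMS b e n)) : Multiset (ℤ × ℤ)) = simpleMS b e n := by
  rw [mwChain_simple b e n hn, ← Multiset.map_coe]
  have hcoe : ((↑(List.range n) : Multiset ℕ)) = Multiset.range n := rfl
  rw [hcoe]
  have hnodup : ((Multiset.range n).map
      (fun j : ℕ => (b + ((n-1:ℕ):ℤ) - (j:ℤ), e + ((n-1:ℕ):ℤ) - (j:ℤ)))).Nodup := by
    apply Multiset.Nodup.map _ (Multiset.nodup_range n)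
    intro x y h
    simp only [Prod.mk.injEq] at h
    omega
  rw [Multiset.Nodup.ext hnodup (nodup_simpleMS b e n)]
  intro p
  simp only [Multiset.mem_map, Multiset.mem_range, mem_simpleMS]
  constructor
  · rintro ⟨j, hj, rfl⟩
    exact ⟨n - 1 - j, by omega, by simp only [Prod.mk.injEq]; omega⟩
  · rintro ⟨j, hj, rfl⟩
    refine ⟨n - 1 - j, by omega, ?_⟩
    simp only [Prod.mk.injEq]
    omega

lemma bind_mwShrink_simple (b e : ℤ) (n : ℕ) :
    (simpleMS b e n).bind mwShrink = if b ≤ e - 1 then simpleMS b (e-1) n else 0 := by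
  rw [simpleMS_eq, Multiset.bind_map]
  by_cases h : b ≤ e - 1
  · rw [if_pos h]
    have hms : ∀ k : ℕ, mwShrink (b + (k:ℤ), e + (k:ℤ)) = {(b + (k:ℤ), e - 1 + (k:ℤ))} := by
      intro k
      rw [mwShrink, if_pos (by simp only; omega)]
      simp only [Multiset.singleton_inj, Prod.mk.injEq]
      exact ⟨trivial, by ring⟩
    rw [Multiset.bind_congr (fun a _ => hms a), Multiset.bind_singleton, simpleMS_eq]
  · rw [if_neg h]
    have hms : ∀ k : ℕ, mwShrink (b + (k:ℤ), e + (k:ℤ)) = 0 := by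
      intro k
      rw [mwShrink, if_neg (by simp only; omega)]
    rw [Multiset.bind_congr (fun a _ => hms a)]
    simp

lemma mwResidual_simple (b e : ℤ) (n : ℕ) (hn : 1 ≤ n) :
    mwResidual (simpleMS b e n) = if b ≤ e - 1 then simpleMS b (e-1) n else 0 := by
  rw [mwResidual, coe_mwChain_simple b e n hn, tsub_self, zero_add,
    bind_mwShrink_simple]

lemma tildeAux_zero_ms : ∀ f, tildeAux f 0 = 0
  | 0 => rfl
  | f+1 => by simp [tildeAux]

lemma simpleMS_ne_zero (b e : ℤ) {n : ℕ} (hn : 1 ≤ n) : simpleMS b e n ≠ 0 := by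
  intro h
  have h2 := card_simpleMS b e n
  rw [h] at h2
  simp at h2
  omega

lemma card_tildeAux_simple : ∀ (L : ℕ) (b e : ℤ) (n f : ℕ), b ≤ e → 1 ≤ n →
    (e - b + 1).toNat = L → L ≤ f →
    Multiset.card (tildeAux f (simpleMS b e n)) = L := by
  intro L
  induction L with
  | zero => intro b e n f hb _ hL _; omega
  | succ L ih =>
    intro b e n f hb hn hL hf
    obtain ⟨f, rfl⟩ : ∃ f', f = f' + 1 := ⟨f - 1, by omega⟩
    rw [tildeAux, if_neg (simpleMS_ne_zero b e hn), Multiset.card_cons,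
      mwResidual_simple b e n hn]
    by_cases hbe : b ≤ e - 1
    · rw [if_pos hbe, ih b (e-1) n f hbe hn (by omega) (by omega)]
    · rw [if_neg hbe, tildeAux_zero_ms]
      have hL0 : L = 0 := by omega
      simp [hL0]

lemma map_segLen_simple (b e : ℤ) (n : ℕ) :
    (simpleMS b e n).map segLen = Multiset.replicate n (e - b + 1).toNat := by
  rw [simpleMS_eq, Multiset.map_map, Multiset.eq_replicate]
  refine ⟨by simp, ?_⟩
  intro x hx
  simp only [Multiset.mem_map, Multiset.mem_range, Function.comp_apply] at hx
  obtain ⟨k, _, rfl⟩ := hx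
  simp only [segLen]
  congr 1
  ring

lemma maxLen_simple (b e : ℤ) (n : ℕ) (hn : 1 ≤ n) :
    maxLen (simpleMS b e n) = (e - b + 1).toNat := by
  rw [maxLen, map_segLen_simple]
  refine le_antisymm (Multiset.sup_le.mpr ?_) (Multiset.le_sup ?_)
  · intro x hx
    rw [Multiset.eq_of_mem_replicate hx]
  · rw [Multiset.mem_replicate]
    omega

/-- If `α` is simple then `n_{α~} = L_α`. -/
theorem card_tilde_eq_maxLen (α : Multiset (ℤ × ℤ)) (hα : IsSimple α) :
    Multiset.card (tilde α) = maxLen α := by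
  obtain ⟨b, e, n, hb, hn, rfl⟩ := hα
  rw [tilde, maxLen_simple b e n hn]
  apply card_tildeAux_simple _ b e n _ hb hn rfl
  have hsz : msSize (simpleMS b e n) = n * (e - b + 1).toNat := by
    rw [msSize, map_segLen_simple, Multiset.sum_replicate, smul_eq_mul]
  rw [hsz]
  calc (e - b + 1).toNat = 1 * (e - b + 1).toNat := (one_mul _).symm
    _ ≤ n * (e - b + 1).toNat := Nat.mul_le_mul_right _ hn
end Aux
end

section
/- Let α and β be multisegments such that L_{α~} = n_α, α ≤ β, and α~ ≤ β~. Then n_α = n_β = L_{α~} = L_{β~}. -/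
-- Lemma block to be inserted before the theorem

lemma interMS_card_le (p q : ℤ × ℤ) : Multiset.card (interMS p q) ≤ 1 := by
  unfold interMS; split <;> simp

lemma card_le_of_elemStep {α β : Multiset (ℤ × ℤ)} (h : ElemStep α β) :
    Multiset.card β ≤ Multiset.card α := by
  obtain ⟨p, q, rest, hα, -, hβ⟩ := h
  subst hα; subst hβ
  have := interMS_card_le p q
  simp only [Multiset.card_cons, Multiset.card_add]
  omega

lemma card_le_of_msLE {α β : Multiset (ℤ × ℤ)} (h : msLE α β) :
    Multiset.card β ≤ Multiset.card α := by
  induction h with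
  | refl => exact le_refl _
  | tail _ hstep ih => exact le_trans (card_le_of_elemStep hstep) ih

lemma maxLen_cons (a : ℤ × ℤ) (s : Multiset (ℤ × ℤ)) :
    maxLen (a ::ₘ s) = segLen a ⊔ maxLen s := by
  simp [maxLen]

lemma maxLen_add (s t : Multiset (ℤ × ℤ)) : maxLen (s + t) = maxLen s ⊔ maxLen t := by
  simp [maxLen]

lemma maxLen_le_of_elemStep {α β : Multiset (ℤ × ℤ)} (h : ElemStep α β) :
    maxLen α ≤ maxLen β := by
  obtain ⟨p, q, rest, hα, -, hβ⟩ := h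
  subst hα; subst hβ
  rw [maxLen_cons, maxLen_cons, maxLen_cons, maxLen_add]
  have hp : segLen p ≤ segLen (min p.1 q.1, max p.2 q.2) := by
    apply Int.toNat_le_toNat
    have h1 := min_le_left p.1 q.1
    have h2 := le_max_left p.2 q.2
    simp only
    omega
  have hq : segLen q ≤ segLen (min p.1 q.1, max p.2 q.2) := by
    apply Int.toNat_le_toNat
    have h1 := min_le_right p.1 q.1
    have h2 := le_max_right p.2 q.2
    simp only
    omega
  refine sup_le (le_sup_of_le_left hp) (sup_le (le_sup_of_le_left hq) ?_)
  exact le_sup_of_le_right (le_sup_of_le_right le_rfl)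

lemma maxLen_le_of_msLE {α β : Multiset (ℤ × ℤ)} (h : msLE α β) :
    maxLen α ≤ maxLen β := by
  induction h with
  | refl => exact le_refl _
  | tail _ hstep ih => exact le_trans ih (maxLen_le_of_elemStep hstep)

lemma mwChainAux_ne_nil (n : ℕ) (α : Multiset (ℤ × ℤ)) (Δ : ℤ × ℤ) :
    mwChainAux n α Δ ≠ [] := by
  cases n with
  | zero => simp [mwChainAux]
  | succ n => unfold mwChainAux; dsimp only; split <;> simp

lemma mwChainAux_head (n : ℕ) (α : Multiset (ℤ × ℤ)) (Δ d : ℤ × ℤ) :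
    (mwChainAux n α Δ).headD d = Δ := by
  cases n with
  | zero => simp [mwChainAux]
  | succ n => unfold mwChainAux; dsimp only; split <;> simp

lemma max'_mem_of_filter {α : Multiset (ℤ × ℤ)} {P : ℤ × ℤ → Prop} [DecidablePred P]
    {e : ℤ} (hP : ∀ p, P p → p.2 = e)
    (h : (((α.filter P).map Prod.fst).toFinset).Nonempty) :
    ((((α.filter P).map Prod.fst).toFinset).max' h, e) ∈ α := by
  have hm := Finset.max'_mem _ h
  rw [Multiset.mem_toFinset, Multiset.mem_map] at hm
  obtain ⟨p, hp, hfst⟩ := hm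
  rw [Multiset.mem_filter] at hp
  have : p = ((((α.filter P).map Prod.fst).toFinset).max' h, e) := by
    have := hP p hp.2
    exact Prod.ext hfst this
  rw [← this]; exact hp.1

lemma mwChainAux_mem (n : ℕ) : ∀ (α : Multiset (ℤ × ℤ)) (Δ : ℤ × ℤ), Δ ∈ α →
    ∀ x ∈ mwChainAux n α Δ, x ∈ α := by
  induction n with
  | zero =>
    intro α Δ hΔ x hx
    simp only [mwChainAux, List.mem_singleton] at hx
    subst hx; exact hΔ
  | succ n ih =>
    intro α Δ hΔ x hx
    unfold mwChainAux at hx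
    dsimp only at hx
    split at hx
    · rename_i hs
      rcases List.mem_cons.mp hx with rfl | hx'
      · exact hΔ
      · refine ih α _ ?_ x hx'
        exact max'_mem_of_filter (fun p hp => hp.1) hs
    · simp only [List.mem_singleton] at hx
      subst hx; exact hΔ

lemma mwChainAux_snd_le (n : ℕ) : ∀ (α : Multiset (ℤ × ℤ)) (Δ : ℤ × ℤ),
    ∀ x ∈ mwChainAux n α Δ, x.2 ≤ Δ.2 := by
  induction n with
  | zero =>
    intro α Δ x hx
    simp only [mwChainAux, List.mem_singleton] at hx
    subst hx; exact le_refl _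
  | succ n ih =>
    intro α Δ x hx
    unfold mwChainAux at hx
    dsimp only at hx
    split at hx
    · rcases List.mem_cons.mp hx with rfl | hx'
      · exact le_refl _
      · have := ih α _ x hx'
        simp only at this
        omega
    · simp only [List.mem_singleton] at hx
      subst hx; exact le_refl _

lemma mwChainAux_nodup (n : ℕ) : ∀ (α : Multiset (ℤ × ℤ)) (Δ : ℤ × ℤ),
    (mwChainAux n α Δ).Nodup := by
  induction n with
  | zero => intro α Δ; simp [mwChainAux]
  | succ n ih =>
    intro α Δ
    unfold mwChainAux
    dsimp only
    split
    · refine List.nodup_cons.mpr ⟨fun hmem => ?_, ih α _⟩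
      have := mwChainAux_snd_le n α _ Δ hmem
      simp only at this
      omega
    · simp

lemma mwChainAux_last (n : ℕ) : ∀ (α : Multiset (ℤ × ℤ)) (Δ d : ℤ × ℤ),
    ((mwChainAux n α Δ).getLastD d).2
      = Δ.2 - (((mwChainAux n α Δ).length - 1 : ℕ) : ℤ) := by
  induction n with
  | zero => intro α Δ d; simp [mwChainAux]
  | succ n ih =>
    intro α Δ d
    unfold mwChainAux
    dsimp only
    split
    · rename_i hs
      rw [List.getLastD_cons]
      rw [ih α _ Δ]
      have hlen : 1 ≤ (mwChainAux n α
          (((((α.filter (fun p => p.2 = Δ.2 - 1 ∧ p.1 < Δ.1)).map Prod.fst).toFinset).max' hs,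
            Δ.2 - 1))).length :=
        List.length_pos_iff.mpr (mwChainAux_ne_nil n α _)
      simp only [List.length_cons]
      rw [Nat.add_sub_cancel, Nat.cast_sub hlen]
      push_cast
      ring
    · simp

lemma mwChain_spec (α : Multiset (ℤ × ℤ)) (hα : α ≠ 0) :
    ∃ Δ : ℤ × ℤ, Δ ∈ α ∧ mwChain α = mwChainAux α.card α Δ := by
  unfold mwChain
  have hends : ((α.map Prod.snd).toFinset).Nonempty := by
    rw [Multiset.toFinset_nonempty]
    simpa using hα
  rw [dif_pos hends]
  set e := ((α.map Prod.snd).toFinset).max' hends with he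
  have hb : (((α.filter (fun p => p.2 = e)).map Prod.fst).toFinset).Nonempty := by
    rw [Multiset.toFinset_nonempty]
    have : e ∈ (α.map Prod.snd).toFinset := Finset.max'_mem _ hends
    rw [Multiset.mem_toFinset, Multiset.mem_map] at this
    obtain ⟨p, hp, hpe⟩ := this
    have hpf : p ∈ α.filter (fun p => p.2 = e) := Multiset.mem_filter.mpr ⟨hp, hpe⟩
    intro h0
    rw [Multiset.map_eq_zero] at h0
    rw [h0] at hpf
    exact absurd hpf (Multiset.notMem_zero p)
  rw [dif_pos hb]
  refine ⟨_, ?_, rfl⟩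
  exact max'_mem_of_filter (fun p hp => hp) hb

lemma mwChain_le (α : Multiset (ℤ × ℤ)) :
    (↑(mwChain α) : Multiset (ℤ × ℤ)) ≤ α := by
  by_cases hα : α = 0
  · subst hα
    unfold mwChain
    simp
  · obtain ⟨Δ, hΔ, hchain⟩ := mwChain_spec α hα
    rw [hchain]
    have hnd : Multiset.Nodup (↑(mwChainAux α.card α Δ) : Multiset (ℤ × ℤ)) :=
      Multiset.coe_nodup.mpr (mwChainAux_nodup _ α Δ)
    rw [Multiset.le_iff_subset hnd]
    intro x hx
    rw [Multiset.mem_coe] at hx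
    exact mwChainAux_mem _ α Δ hΔ x hx

lemma segLen_mwSegment (α : Multiset (ℤ × ℤ)) (hα : α ≠ 0) :
    segLen (mwSegment α) = (mwChain α).length := by
  obtain ⟨Δ, hΔ, hchain⟩ := mwChain_spec α hα
  unfold mwSegment segLen
  rw [hchain]
  rw [mwChainAux_head, mwChainAux_last]
  have hlen : 1 ≤ (mwChainAux α.card α Δ).length :=
    List.length_pos_iff.mpr (mwChainAux_ne_nil _ α _)
  simp only
  omega

lemma card_mwResidual_le (α : Multiset (ℤ × ℤ)) :
    Multiset.card (mwResidual α) ≤ Multiset.card α := by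
  unfold mwResidual
  have hle := mwChain_le α
  have hcard : Multiset.card (↑(mwChain α) : Multiset (ℤ × ℤ)) ≤ Multiset.card α :=
    Multiset.card_le_card hle
  rw [Multiset.card_add, Multiset.card_sub hle, Multiset.card_bind]
  have hsum : ((↑(mwChain α) : Multiset (ℤ × ℤ)).map (Multiset.card ∘ mwShrink)).sum
      ≤ Multiset.card (↑(mwChain α) : Multiset (ℤ × ℤ)) := by
    have hb : ∀ x ∈ ((↑(mwChain α) : Multiset (ℤ × ℤ)).map (Multiset.card ∘ mwShrink)), x ≤ 1 := by
      intro x hx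
      rw [Multiset.mem_map] at hx
      obtain ⟨p, -, rfl⟩ := hx
      simp only [Function.comp_apply]
      unfold mwShrink; split <;> simp
    calc _ ≤ Multiset.card (((↑(mwChain α) : Multiset (ℤ × ℤ)).map (Multiset.card ∘ mwShrink))) • 1 :=
            Multiset.sum_le_card_nsmul _ _ hb
      _ = _ := by simp
  omega

lemma maxLen_tildeAux (n : ℕ) : ∀ α : Multiset (ℤ × ℤ),
    maxLen (tildeAux n α) ≤ Multiset.card α := by
  induction n with
  | zero => intro α; simp [tildeAux, maxLen]
  | succ n ih =>
    intro α
    rw [tildeAux]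
    split
    · simp [maxLen]
    · rename_i hα
      rw [maxLen_cons]
      refine sup_le ?_ (le_trans (ih _) (card_mwResidual_le α))
      rw [segLen_mwSegment α hα]
      obtain ⟨Δ, hΔ, hchain⟩ := mwChain_spec α hα
      calc (mwChain α).length = Multiset.card (↑(mwChain α) : Multiset (ℤ × ℤ)) := by simp
        _ ≤ Multiset.card α := Multiset.card_le_card (mwChain_le α)

/-- If `L_{α~} = n_α`, `α ≤ β` and `α~ ≤ β~`, then `n_α = n_β = L_{α~} = L_{β~}`. -/
theorem card_eq_of_msLE_of_tilde_msLE (α β : Multiset (ℤ × ℤ))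
    (hα : IsMultisegment α) (hβ : IsMultisegment β)
    (hL : maxLen (tilde α) = Multiset.card α)
    (h : msLE α β) (ht : msLE (tilde α) (tilde β)) :
    Multiset.card α = Multiset.card β ∧
    Multiset.card β = maxLen (tilde α) ∧
    maxLen (tilde α) = maxLen (tilde β) := by
  have h1 : Multiset.card β ≤ Multiset.card α := card_le_of_msLE h
  have h2 : maxLen (tilde α) ≤ maxLen (tilde β) := maxLen_le_of_msLE ht
  have h3 : maxLen (tilde β) ≤ Multiset.card β := maxLen_tildeAux _ _
  omega
end
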